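/- arXiv:math/0008098 — 3 statements merged into one kernel-verified Lean document; each statement's English description precedes it below -/
import Mathlib

section
/- For finite nonempty subsets A, B of an abelian group, |A - B| ≤ |A + B|^3 / (|A| · |B|). -/
open Pointwise

theorem ruzsa_sum_difference {G : Type*} [AddCommGroup G] [DecidableEq G]
    (A B : Finset G) (hA : A.Nonempty) (hB : B.Nonempty) :
    ((A - B).card : ℝ) ≤ ((A + B).card : ℝ) ^ 3 / ((A.card : ℝ) * (B.card : ℝ)) := by
  have hA0 : (0:ℝ) < A.card := by exact_mod_cast hA.card_pos
  have hB0 : (0:ℝ) < B.card := by exact_mod_cast hB.card_pos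
  have h1 : ((A - B).card : ℝ) * B.card ≤ (A + B).card * (B + B).card := by
    exact_mod_cast Finset.ruzsa_triangle_inequality_sub_add_add A B B
  have h2 : ((B + B).card : ℝ) ≤ (((A + B).card : ℝ) / A.card) ^ 2 * A.card := by
    have := Finset.pluennecke_ruzsa_inequality_nsmul_add hA B 2
    rw [two_nsmul] at this
    have h' := NNRat.cast_le (K := ℝ) |>.2 this
    push_cast at h'
    exact_mod_cast h'
  rw [le_div_iff₀ (by positivity)]
  rw [div_pow] at h2
  have h3 : ((B + B).card : ℝ) * A.card ≤ ((A + B).card : ℝ) ^ 2 := by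
    rw [← le_div_iff₀ hA0]
    calc ((B + B).card : ℝ) ≤ ((A + B).card : ℝ)^2 / A.card^2 * A.card := h2
      _ = ((A + B).card : ℝ)^2 / A.card := by field_simp
  nlinarith [Nat.cast_nonneg (α := ℝ) (A + B).card, Nat.cast_nonneg (α := ℝ) (A - B).card,
    Nat.cast_nonneg (α := ℝ) (B + B).card]
end

section
/- For finite nonempty subsets A, B of an abelian group, if |A + B| ≤ K·|A|^{1/2}·|B|^{1/2}, then |A - B| ≤ K^3 · |A|^{1/2} · |B|^{1/2}. -/
open Pointwise

theorem ruzsa_triangle_reformulation {G : Type*} [AddCommGroup G] [DecidableEq G]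
    (A B : Finset G) (hA : A.Nonempty) (hB : B.Nonempty) (K : ℝ) (hK : 0 < K)
    (h : ((A + B).card : ℝ) ≤ K * (A.card : ℝ) ^ ((1 : ℝ)/2) * (B.card : ℝ) ^ ((1 : ℝ)/2)) :
    ((A - B).card : ℝ) ≤ K ^ 3 * (A.card : ℝ) ^ ((1 : ℝ)/2) * (B.card : ℝ) ^ ((1 : ℝ)/2) := by
  have ha0 : (0 : ℝ) < A.card := by exact_mod_cast hA.card_pos
  have hb0 : (0 : ℝ) < B.card := by exact_mod_cast hB.card_pos
  -- Ruzsa triangle: |A - B| * |B| ≤ |A + B| * |B + B|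
  have h1 : ((A - B).card : ℝ) * B.card ≤ ((A + B).card : ℝ) * ((B + B).card) := by
    exact_mod_cast Finset.ruzsa_triangle_inequality_sub_add_add A B B
  -- Plünnecke–Ruzsa: |B + B| ≤ (|A + B| / |A|)^2 * |A|
  have h2' : (((B + B).card : ℚ≥0)) ≤ (((A + B).card : ℚ≥0) / A.card) ^ 2 * A.card := by
    simpa [two_nsmul] using Finset.pluennecke_ruzsa_inequality_nsmul_add hA B 2
  have h2 : ((B + B).card : ℝ) * A.card ≤ ((A + B).card : ℝ) ^ 2 := by
    have := (NNRat.cast_le (K := ℝ)).2 h2'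
    push_cast at this
    rw [div_pow, div_mul_eq_mul_div] at this
    calc ((B + B).card : ℝ) * A.card
        ≤ ((A + B).card : ℝ) ^ 2 * A.card / (A.card : ℝ) ^ 2 * A.card := by
          exact mul_le_mul_of_nonneg_right this ha0.le
      _ = ((A + B).card : ℝ) ^ 2 := by field_simp
  -- hence |A - B| * |A| * |B| ≤ |A + B|^3
  have key : ((A - B).card : ℝ) * A.card * B.card ≤ ((A + B).card : ℝ) ^ 3 := by
    have hs0 : (0 : ℝ) ≤ ((A + B).card : ℝ) := by positivity
    nlinarith [h1, h2, mul_le_mul_of_nonneg_left h2 hs0]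
  -- square roots
  set a : ℝ := (A.card : ℝ) ^ ((1 : ℝ)/2) with ha
  set b : ℝ := (B.card : ℝ) ^ ((1 : ℝ)/2) with hb
  have ha2 : a ^ 2 = A.card := by
    rw [ha, ← Real.rpow_natCast _ 2, ← Real.rpow_mul (by positivity)]; norm_num
  have hb2 : b ^ 2 = B.card := by
    rw [hb, ← Real.rpow_natCast _ 2, ← Real.rpow_mul (by positivity)]; norm_num
  have hapos : 0 < a := by rw [ha]; positivity
  have hbpos : 0 < b := by rw [hb]; positivity
  have hs3 : ((A + B).card : ℝ) ^ 3 ≤ (K * a * b) ^ 3 := by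
    have hs0 : (0 : ℝ) ≤ ((A + B).card : ℝ) := by positivity
    exact pow_le_pow_left₀ hs0 h 3
  have : ((A - B).card : ℝ) * A.card * B.card ≤ K ^ 3 * a * b * (A.card * B.card) := by
    calc ((A - B).card : ℝ) * A.card * B.card ≤ (K * a * b) ^ 3 := key.trans hs3
      _ = K ^ 3 * a * b * (a ^ 2 * b ^ 2) := by ring
      _ = K ^ 3 * a * b * (A.card * B.card) := by rw [ha2, hb2]
  have hab : (0 : ℝ) < A.card * B.card := by positivity
  calc ((A - B).card : ℝ)
      = ((A - B).card : ℝ) * (A.card * B.card) / (A.card * B.card) := by field_simp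
    _ ≤ K ^ 3 * a * b * (A.card * B.card) / (A.card * B.card) := by
        gcongr ?_ / _
        linarith [this]
    _ = K ^ 3 * a * b := by field_simp
end

section
/- Two axis-transverse rectangles (tubes) in ℝ² of dimensions 1 × δ whose long axes make an angle θ with 0 < δ ≤ θ ≤ π/2 intersect in a set of area at most C·δ²/θ for an absolute constant C. -/
open MeasureTheory

/-- The `δ`-neighborhood of the unit segment starting at `x` in direction `ω`:
a `1 × δ` tube in the plane. -/
def planeTube (x ω : EuclideanSpace ℝ (Fin 2)) (δ : ℝ) : Set (EuclideanSpace ℝ (Fin 2)) :=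
  {y | ∃ t : ℝ, t ∈ Set.Icc (0 : ℝ) 1 ∧ dist y (x + t • ω) ≤ δ}

lemma det_toEuclideanLin (M : Matrix (Fin 2) (Fin 2) ℝ) :
    LinearMap.det (Matrix.toEuclideanLin M) = M.det := by
  have h : (Matrix.toEuclideanLin M : EuclideanSpace ℝ (Fin 2) →ₗ[ℝ] EuclideanSpace ℝ (Fin 2)) =
      (((WithLp.linearEquiv 2 ℝ (Fin 2 → ℝ)).symm :
          (Fin 2 → ℝ) ≃ₗ[ℝ] EuclideanSpace ℝ (Fin 2)) : (Fin 2 → ℝ) →ₗ[ℝ] _) ∘ₗ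
        Matrix.toLin' M ∘ₗ
        ((((WithLp.linearEquiv 2 ℝ (Fin 2 → ℝ)).symm.symm) :
          EuclideanSpace ℝ (Fin 2) ≃ₗ[ℝ] (Fin 2 → ℝ)) : _ →ₗ[ℝ] (Fin 2 → ℝ)) := rfl
  rw [h, LinearMap.det_conj, LinearMap.det_toLin']

/-- Norm squared in coordinates for `EuclideanSpace ℝ (Fin 2)`. -/
lemma norm_sq_fin_two (w : EuclideanSpace ℝ (Fin 2)) :
    w 0 ^ 2 + w 1 ^ 2 = ‖w‖ ^ 2 := by
  rw [← real_inner_self_eq_norm_sq]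
  simp only [PiLp.inner_apply, Fin.sum_univ_two, RCLike.inner_apply, conj_trivial, sq]

/-- A tube is contained in an infinite strip of half-width `δ` determined by the
normal direction `(-ω 1, ω 0)`. -/
lemma tube_subset_strip (x ω : EuclideanSpace ℝ (Fin 2)) (δ : ℝ) (hω : ‖ω‖ = 1)
    {y : EuclideanSpace ℝ (Fin 2)} (hy : y ∈ planeTube x ω δ) :
    |(-(ω 1) * y 0 + ω 0 * y 1) - (-(ω 1) * x 0 + ω 0 * x 1)| ≤ δ := by
  obtain ⟨t, -, ht⟩ := hy
  rw [dist_eq_norm] at ht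
  set w : EuclideanSpace ℝ (Fin 2) := y - (x + t • ω) with hw
  have hw0 : w 0 = y 0 - (x 0 + t * ω 0) := by simp [hw]
  have hw1 : w 1 = y 1 - (x 1 + t * ω 1) := by simp [hw]
  have hnorm : w 0 ^ 2 + w 1 ^ 2 = ‖w‖ ^ 2 := norm_sq_fin_two w
  have hunit : ω 0 ^ 2 + ω 1 ^ 2 = 1 := by rw [norm_sq_fin_two, hω]; norm_num
  have key : ((-(ω 1) * y 0 + ω 0 * y 1) - (-(ω 1) * x 0 + ω 0 * x 1)) ^ 2 ≤ ‖w‖ ^ 2 := by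
    have hval : (-(ω 1) * y 0 + ω 0 * y 1) - (-(ω 1) * x 0 + ω 0 * x 1)
        = -(ω 1) * w 0 + ω 0 * w 1 := by rw [hw0, hw1]; ring
    rw [hval, ← hnorm]
    nlinarith [sq_nonneg (ω 0 * w 0 + ω 1 * w 1)]
  have h := Real.sqrt_le_sqrt key
  rw [Real.sqrt_sq_eq_abs, Real.sqrt_sq (norm_nonneg w)] at h
  exact h.trans ht

theorem tube_intersection_area :
    ∃ C : ℝ, 0 < C ∧
      ∀ (δ θ : ℝ) (x₁ x₂ ω₁ ω₂ : EuclideanSpace ℝ (Fin 2)),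
        0 < δ → δ ≤ θ → θ ≤ Real.pi / 2 →
        ‖ω₁‖ = 1 → ‖ω₂‖ = 1 →
        InnerProductGeometry.angle ω₁ ω₂ = θ →
        volume (planeTube x₁ ω₁ δ ∩ planeTube x₂ ω₂ δ) ≤ ENNReal.ofReal (C * δ ^ 2 / θ) := by
  refine ⟨2 * Real.pi, by positivity, ?_⟩
  intro δ θ x₁ x₂ ω₁ ω₂ hδ hδθ hθ hω₁ hω₂ hangle
  have hθpos : 0 < θ := lt_of_lt_of_le hδ hδθ
  -- trigonometry
  have hcos : Real.cos θ = ω₁ 0 * ω₂ 0 + ω₁ 1 * ω₂ 1 := by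
    rw [← hangle, InnerProductGeometry.cos_angle, hω₁, hω₂]
    simp [PiLp.inner_apply, Fin.sum_univ_two, RCLike.inner_apply]
    ring
  have hsinpos : 0 < Real.sin θ :=
    Real.sin_pos_of_pos_of_lt_pi hθpos (lt_of_le_of_lt hθ (by linarith [Real.pi_pos]))
  set d : ℝ := ω₁ 0 * ω₂ 1 - ω₂ 0 * ω₁ 1 with hd
  have hunit₁ : ω₁ 0 ^ 2 + ω₁ 1 ^ 2 = 1 := by rw [norm_sq_fin_two, hω₁]; norm_num
  have hunit₂ : ω₂ 0 ^ 2 + ω₂ 1 ^ 2 = 1 := by rw [norm_sq_fin_two, hω₂]; norm_num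
  have hdsq : d ^ 2 = Real.sin θ ^ 2 := by
    have h1 : Real.sin θ ^ 2 + Real.cos θ ^ 2 = 1 := Real.sin_sq_add_cos_sq θ
    rw [hcos] at h1
    have h2 : d ^ 2 + (ω₁ 0 * ω₂ 0 + ω₁ 1 * ω₂ 1) ^ 2
        = (ω₁ 0 ^ 2 + ω₁ 1 ^ 2) * (ω₂ 0 ^ 2 + ω₂ 1 ^ 2) := by rw [hd]; ring
    rw [hunit₁, hunit₂] at h2
    linarith
  have habsd : |d| = Real.sin θ := by
    have := congrArg Real.sqrt hdsq
    rwa [Real.sqrt_sq_eq_abs, Real.sqrt_sq hsinpos.le] at this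
  have hdne : d ≠ 0 := by
    intro h
    rw [h] at hdsq
    nlinarith
  -- the linear map
  set M : Matrix (Fin 2) (Fin 2) ℝ := !![-(ω₁ 1), ω₁ 0; -(ω₂ 1), ω₂ 0] with hM
  set L : EuclideanSpace ℝ (Fin 2) →ₗ[ℝ] EuclideanSpace ℝ (Fin 2) := Matrix.toEuclideanLin M
    with hL
  have hdet : LinearMap.det L = d := by
    rw [hL, det_toEuclideanLin, hM, Matrix.det_fin_two_of]
    ring
  have hL0 : ∀ y : EuclideanSpace ℝ (Fin 2), L y 0 = -(ω₁ 1) * y 0 + ω₁ 0 * y 1 := by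
    intro y
    show (Matrix.mulVec M ((WithLp.equiv 2 (Fin 2 → ℝ)) y)) 0 = _
    simp [hM, Matrix.mulVec, dotProduct, Fin.sum_univ_two, Matrix.vecHead, Matrix.vecTail]
  have hL1 : ∀ y : EuclideanSpace ℝ (Fin 2), L y 1 = -(ω₂ 1) * y 0 + ω₂ 0 * y 1 := by
    intro y
    show (Matrix.mulVec M ((WithLp.equiv 2 (Fin 2 → ℝ)) y)) 1 = _
    simp [hM, Matrix.mulVec, dotProduct, Fin.sum_univ_two, Matrix.vecHead, Matrix.vecTail]
  -- the box
  set c : Fin 2 → ℝ := ![-(ω₁ 1) * x₁ 0 + ω₁ 0 * x₁ 1, -(ω₂ 1) * x₂ 0 + ω₂ 0 * x₂ 1] with hc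
  set B : Set (EuclideanSpace ℝ (Fin 2)) :=
    (MeasurableEquiv.toLp 2 (Fin 2 → ℝ)).symm ⁻¹'
      (Set.univ.pi fun i => Set.Icc (c i - δ) (c i + δ)) with hB
  have hsubset : planeTube x₁ ω₁ δ ∩ planeTube x₂ ω₂ δ ⊆ L ⁻¹' B := by
    rintro y ⟨hy₁, hy₂⟩
    have h1 := tube_subset_strip x₁ ω₁ δ hω₁ hy₁
    have h2 := tube_subset_strip x₂ ω₂ δ hω₂ hy₂
    rw [abs_sub_le_iff] at h1 h2
    simp only [Set.mem_preimage, hB, Set.mem_pi, Set.mem_univ, forall_true_left]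
    rw [Fin.forall_fin_two]
    constructor
    · rw [show ((MeasurableEquiv.toLp 2 (Fin 2 → ℝ)).symm (L y)) 0 = L y 0 from rfl, hL0]
      simp only [hc, Matrix.cons_val_zero, Set.mem_Icc]
      constructor <;> linarith [h1.1, h1.2]
    · rw [show ((MeasurableEquiv.toLp 2 (Fin 2 → ℝ)).symm (L y)) 1 = L y 1 from rfl, hL1]
      simp only [hc, Matrix.cons_val_one, Matrix.head_cons, Matrix.cons_val_zero, Set.mem_Icc]
      constructor <;> linarith [h2.1, h2.2]
  have hvolB : volume B = ENNReal.ofReal (2 * δ) * ENNReal.ofReal (2 * δ) := by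
    rw [hB, (EuclideanSpace.volume_preserving_symm_measurableEquiv_toLp (Fin 2)).measure_preimage
      ((MeasurableSet.univ_pi fun i => measurableSet_Icc).nullMeasurableSet)]
    rw [volume_pi_pi]
    simp [Real.volume_Icc, Fin.prod_univ_two]
    ring_nf
    rw [ENNReal.ofReal_mul hδ.le, ENNReal.ofReal_ofNat]
    ring
  have hvol : volume (L ⁻¹' B) = ENNReal.ofReal |d⁻¹| * volume B := by
    rw [MeasureTheory.Measure.addHaar_preimage_linearMap volume (by rw [hdet]; exact hdne), hdet]
  calc volume (planeTube x₁ ω₁ δ ∩ planeTube x₂ ω₂ δ)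
      ≤ volume (L ⁻¹' B) := measure_mono hsubset
    _ = ENNReal.ofReal |d⁻¹| * (ENNReal.ofReal (2 * δ) * ENNReal.ofReal (2 * δ)) := by
        rw [hvol, hvolB]
    _ ≤ ENNReal.ofReal (2 * Real.pi * δ ^ 2 / θ) := by
        rw [← ENNReal.ofReal_mul (by positivity), ← ENNReal.ofReal_mul (abs_nonneg _)]
        apply ENNReal.ofReal_le_ofReal
        have habsinv : |d⁻¹| = (Real.sin θ)⁻¹ := by rw [abs_inv, habsd]
        rw [habsinv]
        have hsin_lb : 2 / Real.pi * θ ≤ Real.sin θ := Real.mul_le_sin hθpos.le hθ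
        have hpi := Real.pi_pos
        have hc : 0 < 2 / Real.pi * θ := by positivity
        have h4 : (Real.sin θ)⁻¹ * (2 * δ * (2 * δ)) ≤ (2 / Real.pi * θ)⁻¹ * (2 * δ * (2 * δ)) :=
          mul_le_mul_of_nonneg_right (inv_anti₀ hc hsin_lb) (by positivity)
        refine h4.trans (le_of_eq ?_)
        field_simp
end
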